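/- Under the standing setup, suppose T_f ∪ T_g is a t-intersecting family with τ_t(T_f ∪ T_g) = t, that |T_f| = k−t+1 and |T_g| = ℓ−t+1, and that |M_f ∩ M_g| ≥ t+2 where M_f = ⋃_{A∈T_f} A and M_g = ⋃_{B∈T_g} B. Then there exist X ⊆ [t+1,n] with |X| = k−t+1 and Y ⊆ [t+1,n] with |Y| = ℓ−t+1 with |X∩Y| ≥ 2 such that (F,G) is isomorphic to (H(k,t;X,Y), H'(ℓ,t;Y,X)), where H(k,t;X,Y) = {F ∈ C([n],k) : [t] ⊆ F and |F∩Y| ≥ 1} ∪ {(X∪[t])\{i} : i ∈ [t]} and H'(ℓ,t;Y,X) = {G ∈ C([n],ℓ) : [t] ⊆ G and |G∩X| ≥ 1} ∪ {(Y∪[t])\{i} : i ∈ [t]}. -/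

import Mathlib

/-- The interval `[a,b] = {a, a+1, …, b}` as a finset of naturals. -/
def Iv (a b : ℕ) : Finset ℕ := Finset.Icc a b

/-- `ksubsets S k` is the family of all `k`-element subsets of `S`. -/
def ksubsets (S : Finset ℕ) (k : ℕ) : Finset (Finset ℕ) :=
  S.powerset.filter (fun F => F.card = k)

/-- Families `F` and `G` are cross `t`-intersecting. -/
def crossInt (t : ℕ) (F G : Finset (Finset ℕ)) : Prop :=
  ∀ A ∈ F, ∀ B ∈ G, t ≤ (A ∩ B).card

/-- The `t`-covering number of a family of subsets of `[n]`. -/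
noncomputable def tau (n t : ℕ) (F : Finset (Finset ℕ)) : ℕ :=
  sInf {c : ℕ | ∃ T : Finset ℕ, T ⊆ Finset.Icc 1 n ∧ T.card = c ∧ ∀ A ∈ F, t ≤ (T ∩ A).card}

/-- The collection of all `t`-covers of `F` of size `t+1`. -/
def covers (n t : ℕ) (F : Finset (Finset ℕ)) : Finset (Finset ℕ) :=
  (Finset.Icc 1 n).powerset.filter (fun T => T.card = t + 1 ∧ ∀ A ∈ F, t ≤ (T ∩ A).card)

/-- `F ⊆ ksubsets S k` and `G ⊆ ksubsets S l` form a maximal cross `t`-intersecting pair. -/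
def maximalCrossIn (S : Finset ℕ) (k l t : ℕ) (F G : Finset (Finset ℕ)) : Prop :=
  F ⊆ ksubsets S k ∧ G ⊆ ksubsets S l ∧ crossInt t F G ∧
  ∀ F' G' : Finset (Finset ℕ), F' ⊆ ksubsets S k → G' ⊆ ksubsets S l →
    crossInt t F' G' → F ⊆ F' → G ⊆ G' → F = F' ∧ G = G'

/-- Elementwise image of a family under a permutation. -/
def mapFam (σ : Equiv.Perm ℕ) (F : Finset (Finset ℕ)) : Finset (Finset ℕ) :=
  F.image (fun A => A.image σ)

/-- `σ` is a permutation of `[n]` (maps `[n]` into, hence onto, itself). -/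
def permOn (n : ℕ) (σ : Equiv.Perm ℕ) : Prop := ∀ x ∈ Finset.Icc 1 n, σ x ∈ Finset.Icc 1 n

/-- The pairs `(F, G)` and `(F', G')` are isomorphic via a permutation of `[n]`. -/
def isoPair (n : ℕ) (F G F' G' : Finset (Finset ℕ)) : Prop :=
  ∃ σ : Equiv.Perm ℕ, permOn n σ ∧ mapFam σ F = F' ∧ mapFam σ G = G'

/-- `F` and `F'` are isomorphic via a permutation of `[n]`. -/
def isoFam (n : ℕ) (F F' : Finset (Finset ℕ)) : Prop :=
  ∃ σ : Equiv.Perm ℕ, permOn n σ ∧ mapFam σ F = F'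

/-- Construction `𝒜(k,t) = {F ∈ C([n],k) : |F ∩ [t+2]| ≥ t+1}`. -/
def famA (n k t : ℕ) : Finset (Finset ℕ) :=
  (ksubsets (Iv 1 n) k).filter (fun F => t + 1 ≤ (F ∩ Iv 1 (t+2)).card)

/-- Construction `𝒞₁(ℓ,t) = {[ℓ+1]\{i} : i ∈ [t+1]} ∪ {G ∈ C([n],ℓ) : [t+1] ⊆ G}`. -/
def famC1 (n l t : ℕ) : Finset (Finset ℕ) :=
  (Iv 1 (t+1)).image (fun i => (Iv 1 (l+1)).erase i) ∪
  (ksubsets (Iv 1 n) l).filter (fun G => Iv 1 (t+1) ⊆ G)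

/-- Construction `𝒞₂(k,t;ℓ)`. -/
def famC2 (n k t l : ℕ) : Finset (Finset ℕ) :=
  (ksubsets (Iv 1 n) k).filter
    (fun F => (F ∩ Iv 1 (t+1)).card = t ∧ 1 ≤ (F ∩ Iv (t+2) (l+1)).card) ∪
  (ksubsets (Iv 1 n) k).filter (fun F => Iv 1 (t+1) ⊆ F)

/-- Construction `ℋ(k,t;X,Y) = {F ∈ C([n],k) : [t] ⊆ F, |F∩Y| ≥ 1} ∪ {(X∪[t])\{i} : i ∈ [t]}`. -/
def famH (n k t : ℕ) (X Y : Finset ℕ) : Finset (Finset ℕ) :=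
  (ksubsets (Iv 1 n) k).filter (fun F => Iv 1 t ⊆ F ∧ 1 ≤ (F ∩ Y).card) ∪
  (Iv 1 t).image (fun i => (X ∪ Iv 1 t).erase i)

/-- Construction `ℬ(k;(a₁,a₂,a₃,a₄))`. -/
def famB (n k a1 a2 a3 a4 : ℕ) : Finset (Finset ℕ) :=
  (ksubsets (Iv 1 n) k).filter
    (fun F => ({a1, a2} : Finset ℕ) ⊆ F ∨ ({a2, a3} : Finset ℕ) ⊆ F ∨ ({a3, a4} : Finset ℕ) ⊆ F)

/-- Binomial coefficient `C(a,b)` for integers, `0` if `b < 0` or `b > a`. -/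
def ch (a b : ℤ) : ℤ := if 0 ≤ b ∧ b ≤ a then (Nat.choose a.toNat b.toNat : ℤ) else 0

/-- `g(m,x,y,t) = m·C(n−t−1,x−t−1) + y(t+1)(y−t+1)·C(n−t−2,x−t−2)`. -/
def gfun (n m x y t : ℤ) : ℤ :=
  m * ch (n - t - 1) (x - t - 1) + y * (t + 1) * (y - t + 1) * ch (n - t - 2) (x - t - 2)

/-- `a(x,t) = (t+2)·C(n−t−2,x−t−1) + C(n−t−2,x−t−2)`. -/
def afun (n x t : ℤ) : ℤ := (t + 2) * ch (n - t - 2) (x - t - 1) + ch (n - t - 2) (x - t - 2)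

/-- `c₁(y,t) = C(n−t−1,y−t−1) + t + 1`. -/
def c1fun (n y t : ℤ) : ℤ := ch (n - t - 1) (y - t - 1) + t + 1

/-- `c₂(x,y,t) = (t+1)(C(n−t−1,x−t) − C(n−y−1,x−t)) + C(n−t−1,x−t−1)`. -/
def c2fun (n x y t : ℤ) : ℤ :=
  (t + 1) * (ch (n - t - 1) (x - t) - ch (n - y - 1) (x - t)) + ch (n - t - 1) (x - t - 1)

/-- `h(x,y,t) = C(n−t,x−t) − C(n−y−1,x−t) + t`. -/
def hfun (n x y t : ℤ) : ℤ := ch (n - t) (x - t) - ch (n - y - 1) (x - t) + t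
section Helpers
open Finset

lemma exists_perm_helper (n t : ℕ) (T : Finset ℕ) (hT : T ⊆ Icc 1 n) (hTc : T.card = t)
    (htn : t ≤ n) :
    ∃ σ : Equiv.Perm ℕ, (∀ x, σ (σ x) = x) ∧ permOn n σ ∧ T.image σ = Icc 1 t := by
  classical
  set I : Finset ℕ := Icc 1 t with hI
  set d : Finset ℕ := T \ I with hd
  set d' : Finset ℕ := I \ T with hd'
  have hIcard : I.card = t := by simp [hI]
  have h1 : d.card + (T ∩ I).card = T.card := card_sdiff_add_card_inter T I
  have h2 : d'.card + (I ∩ T).card = I.card := card_sdiff_add_card_inter I T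
  have hTI : (T ∩ I).card = (I ∩ T).card := by rw [inter_comm]
  have hcards : d.card = d'.card := by omega
  let e : (d : Type) ≃ (d' : Type) := Finset.equivOfCardEq hcards
  let f : ℕ → ℕ := fun x =>
    if h : x ∈ d then (e ⟨x, h⟩ : ℕ)
    else if h' : x ∈ d' then (e.symm ⟨x, h'⟩ : ℕ) else x
  have hdd' : ∀ x, x ∈ d → x ∈ d' → False := by
    intro x hx hx'
    simp [hd, hd'] at hx hx'
    tauto
  have hfd : ∀ x (h : x ∈ d), f x = (e ⟨x, h⟩ : ℕ) := by intro x h; simp [f, h]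
  have hfd' : ∀ x (h : x ∈ d'), f x = (e.symm ⟨x, h⟩ : ℕ) := by
    intro x h
    have : x ∉ d := fun hc => hdd' x hc h
    simp [f, this, h]
  have hfo : ∀ x, x ∉ d → x ∉ d' → f x = x := by intro x h h'; simp [f, h, h']
  have hinv : Function.Involutive f := by
    intro x
    by_cases h : x ∈ d
    · rw [hfd x h]
      have hm : ((e ⟨x, h⟩ : ℕ)) ∈ d' := (e ⟨x, h⟩).2
      rw [hfd' _ hm]
      have : (⟨(e ⟨x, h⟩ : ℕ), hm⟩ : (d' : Type)) = e ⟨x, h⟩ := rfl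
      rw [this, Equiv.symm_apply_apply]
    · by_cases h' : x ∈ d'
      · rw [hfd' x h']
        have hm : ((e.symm ⟨x, h'⟩ : ℕ)) ∈ d := (e.symm ⟨x, h'⟩).2
        rw [hfd _ hm]
        have : (⟨(e.symm ⟨x, h'⟩ : ℕ), hm⟩ : (d : Type)) = e.symm ⟨x, h'⟩ := rfl
        rw [this, Equiv.apply_symm_apply]
      · rw [hfo x h h', hfo x h h']
  refine ⟨hinv.toPerm, fun x => hinv x, ?_, ?_⟩
  · intro x hx
    show f x ∈ Icc 1 n
    by_cases h : x ∈ d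
    · have hm : ((e ⟨x, h⟩ : ℕ)) ∈ d' := (e ⟨x, h⟩).2
      rw [hfd x h]
      have : (e ⟨x, h⟩ : ℕ) ∈ I := (mem_sdiff.mp hm).1
      exact mem_Icc.mpr ⟨(mem_Icc.mp this).1, le_trans (mem_Icc.mp this).2 htn⟩
    · by_cases h' : x ∈ d'
      · have hm : ((e.symm ⟨x, h'⟩ : ℕ)) ∈ d := (e.symm ⟨x, h'⟩).2
        rw [hfd' x h']
        exact hT (mem_sdiff.mp hm).1
      · rw [hfo x h h']; exact hx
  · apply eq_of_subset_of_card_le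
    · intro y hy
      obtain ⟨x, hx, rfl⟩ := mem_image.mp hy
      show f x ∈ I
      by_cases h : x ∈ d
      · have hm : ((e ⟨x, h⟩ : ℕ)) ∈ d' := (e ⟨x, h⟩).2
        rw [hfd x h]
        exact (mem_sdiff.mp hm).1
      · have h' : x ∉ d' := fun hc => (mem_sdiff.mp hc).2 hx
        rw [hfo x h h']
        by_contra hxI
        exact h (mem_sdiff.mpr ⟨hx, hxI⟩)
    · show #I ≤ #(image f T)
      rw [card_image_of_injective _ hinv.injective, hTc, hIcard]

lemma mem_ksubsets {S : Finset ℕ} {k : ℕ} {A : Finset ℕ} :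
    A ∈ ksubsets S k ↔ A ⊆ S ∧ A.card = k := by
  simp [ksubsets]

lemma mem_covers {n t : ℕ} {F : Finset (Finset ℕ)} {C : Finset ℕ} :
    C ∈ covers n t F ↔ C ⊆ Icc 1 n ∧ C.card = t + 1 ∧ ∀ A ∈ F, t ≤ (C ∩ A).card := by
  simp [covers, and_assoc]

lemma cover_eq {t : ℕ} {T C : Finset ℕ} (hTc : T.card = t) (hCc : C.card = t + 1)
    (hsub : T ⊆ C) {x : ℕ} (hx : x ∈ C \ T) : C = T ∪ {x} := by
  have hx' := mem_sdiff.mp hx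
  apply (eq_of_subset_of_card_le (union_subset hsub (by simp [hx'.1]))
    (le_of_eq ?_)).symm
  rw [card_union_of_disjoint (by simp [hx'.2]), hTc, hCc, card_singleton]

/-- Cover structure lemma. -/
lemma coverStructure (n k t : ℕ) (F : Finset (Finset ℕ)) (T : Finset ℕ)
    (ht0 : 0 < t) (hk : t + 1 ≤ k)
    (hTcard : T.card = t)
    (hTsub : ∀ C ∈ covers n t F, T ⊆ C)
    (hcov : (covers n t F).card = k - t + 1)
    (hF : F ⊆ ksubsets (Iv 1 n) k) :
    ((covers n t F).biUnion (fun C => C \ T)).card = k - t + 1 ∧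
    Disjoint ((covers n t F).biUnion (fun C => C \ T)) T ∧
    ((covers n t F).biUnion (fun C => C \ T)) ⊆ Icc 1 n ∧
    (∀ A ∈ F, ¬ T ⊆ A → ∃ i ∈ T, A = (((covers n t F).biUnion (fun C => C \ T)) ∪ T).erase i) := by
  classical
  set X := (covers n t F).biUnion (fun C => C \ T) with hX
  have hXT : Disjoint X T := by
    rw [disjoint_left]
    intro x hx hxT
    obtain ⟨C, hC, hxC⟩ := mem_biUnion.mp hx
    exact (mem_sdiff.mp hxC).2 hxT
  have hXI : X ⊆ Icc 1 n := by
    intro x hx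
    obtain ⟨C, hC, hxC⟩ := mem_biUnion.mp hx
    exact (mem_covers.mp hC).1 (mem_sdiff.mp hxC).1
  have hone : ∀ C ∈ covers n t F, (C \ T).card = 1 := by
    intro C hC
    rw [card_sdiff_of_subset (hTsub C hC), (mem_covers.mp hC).2.1, hTcard]
    omega
  have hXcard : X.card = k - t + 1 := by
    rw [hX, card_biUnion, ← hcov]
    · rw [Finset.sum_congr rfl hone]
      simp
    · intro C hC C' hC' hne
      rw [Function.onFun, disjoint_left]
      intro x hx hx'
      apply hne
      rw [cover_eq hTcard (mem_covers.mp hC).2.1 (hTsub C hC) hx,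
        cover_eq hTcard (mem_covers.mp hC').2.1 (hTsub C' hC') hx']
  refine ⟨hXcard, hXT, hXI, ?_⟩
  intro A hA hTA
  obtain ⟨hAsub, hAcard⟩ := mem_ksubsets.mp (hF hA)
  have hTAlt : (T ∩ A).card < t := by
    rcases lt_or_ge (T ∩ A).card t with h | h
    · exact h
    · exfalso
      apply hTA
      have : T ∩ A = T := eq_of_subset_of_card_le inter_subset_left (by omega)
      exact this ▸ inter_subset_right
  -- every cover contributes its extra element to A
  have hXA : X ⊆ A := by
    intro x hx
    obtain ⟨C, hC, hxC⟩ := mem_biUnion.mp hx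
    have hCeq := cover_eq hTcard (mem_covers.mp hC).2.1 (hTsub C hC) hxC
    have htle : t ≤ (C ∩ A).card := (mem_covers.mp hC).2.2 A hA
    by_contra hxA
    have : C ∩ A ⊆ T ∩ A := by
      intro y hy
      have hy' := mem_inter.mp hy
      rw [hCeq] at hy'
      rcases mem_union.mp hy'.1 with h | h
      · exact mem_inter.mpr ⟨h, hy'.2⟩
      · exact absurd ((mem_singleton.mp h) ▸ hy'.2) hxA
    have := card_le_card this
    omega
  -- the T∩A part has size exactly t-1
  have hTAge : t - 1 ≤ (T ∩ A).card := by
    have hne : (covers n t F).Nonempty := card_pos.mp (by omega)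
    obtain ⟨C, hC⟩ := hne
    have htle : t ≤ (C ∩ A).card := (mem_covers.mp hC).2.2 A hA
    obtain ⟨x, hx⟩ := card_eq_one.mp (hone C hC)
    have hCeq : C = T ∪ {x} := cover_eq hTcard (mem_covers.mp hC).2.1 (hTsub C hC)
      (hx ▸ mem_singleton_self x)
    have : C ∩ A ⊆ (T ∩ A) ∪ {x} := by
      intro y hy
      have hy' := mem_inter.mp hy
      rw [hCeq] at hy'
      rcases mem_union.mp hy'.1 with h | h
      · exact mem_union_left _ (mem_inter.mpr ⟨h, hy'.2⟩)
      · exact mem_union_right _ h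
    have h1 := card_le_card this
    have h2 := card_union_le (T ∩ A) {x}
    rw [card_singleton] at h2
    omega
  have hTAeq : (T ∩ A).card = t - 1 := by omega
  -- A = X ∪ (T ∩ A)
  have hAeq : A = X ∪ (T ∩ A) := by
    apply (eq_of_subset_of_card_le (union_subset hXA inter_subset_right) (le_of_eq ?_)).symm
    rw [card_union_of_disjoint (disjoint_of_subset_right inter_subset_left hXT),
      hXcard, hTAeq, hAcard]
    omega
  -- find i
  have hsing : (T \ (T ∩ A)).card = 1 := by
    rw [card_sdiff_of_subset inter_subset_left, hTcard, hTAeq]; omega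
  obtain ⟨i, hi⟩ := card_eq_one.mp hsing
  have hiT : i ∈ T ∧ i ∉ T ∩ A := by
    have : i ∈ T \ (T ∩ A) := hi ▸ mem_singleton_self i
    exact ⟨(mem_sdiff.mp this).1, (mem_sdiff.mp this).2⟩
  refine ⟨i, hiT.1, ?_⟩
  have hTerase : T ∩ A = T.erase i := by
    apply eq_of_subset_of_card_le
    · intro y hy
      exact mem_erase.mpr ⟨fun h => hiT.2 (h ▸ hy), (mem_inter.mp hy).1⟩
    · rw [card_erase_of_mem hiT.1, hTcard, hTAeq]
  rw [erase_union_distrib, ← hTerase, erase_eq_of_notMem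
    (fun h => disjoint_left.mp hXT h hiT.1), ← hAeq]

lemma mapFam_famH (n k t : ℕ) (σ : Equiv.Perm ℕ) (hinv : ∀ x, σ (σ x) = x)
    (hIcc : (Icc 1 n).image σ = Icc 1 n) (T X Y : Finset ℕ)
    (hT : T.image σ = Iv 1 t) :
    mapFam σ ((ksubsets (Iv 1 n) k).filter (fun A => T ⊆ A ∧ 1 ≤ (A ∩ Y).card)
      ∪ T.image (fun i => (X ∪ T).erase i))
    = famH n k t (X.image σ) (Y.image σ) := by
  classical
  have hinj : Function.Injective (σ : ℕ → ℕ) := σ.injective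
  have himg : ∀ S : Finset ℕ, (S.image σ).image σ = S := by
    intro S
    rw [image_image]
    have : (σ : ℕ → ℕ) ∘ σ = id := funext hinv
    rw [this, image_id]
  simp only [Iv] at hT
  rw [mapFam, image_union, famH]
  delta Iv
  congr 1
  · ext A'
    simp only [mem_image, Finset.mem_filter, mem_ksubsets]
    constructor
    · rintro ⟨A, ⟨⟨hAs, hAc⟩, hTA, hAY⟩, rfl⟩
      refine ⟨⟨?_, ?_⟩, ?_, ?_⟩
      · show A.image σ ⊆ Icc 1 n
        rw [← hIcc]; exact image_subset_image (by simpa [Iv] using hAs)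
      · rw [card_image_of_injective _ hinj]; exact hAc
      · rw [← hT]; exact image_subset_image hTA
      · rw [← image_inter _ _ hinj, card_image_of_injective _ hinj]; exact hAY
    · rintro ⟨⟨hAs, hAc⟩, hTA, hAY⟩
      refine ⟨A'.image σ, ⟨⟨?_, ?_⟩, ?_, ?_⟩, himg A'⟩
      · show A'.image σ ⊆ Icc 1 n
        rw [← hIcc]; exact image_subset_image (by simpa [Iv] using hAs)
      · rw [card_image_of_injective _ hinj]; exact hAc
      · rw [← himg T, hT]; exact image_subset_image hTA
      · rw [show Y = (Y.image σ).image σ from (himg Y).symm, ← image_inter _ _ hinj,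
          card_image_of_injective _ hinj]
        exact hAY
  · rw [image_image, ← hT, image_image]
    apply image_congr
    intro i hi
    simp only [Function.comp_apply]
    rw [image_erase hinj, image_union]

end Helpers

open Finset
set_option maxHeartbeats 1600000

/-- Lemma 2.4(iib). -/
theorem covers_union_t_intersecting_extremal_H
    (n k l t : ℕ) (hn0 : 0 < n) (ht0 : 0 < t) (hk : t + 1 ≤ k) (hl : t + 1 ≤ l)
    (hn : (t+1)^2 * (k+l)^2 * (k - t + 1) * (l - t + 1) + k + l - t ≤ n)
    (F G : Finset (Finset ℕ))
    (hmax : maximalCrossIn (Iv 1 n) k l t F G)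
    (htF : tau n t F = t + 1) (htG : tau n t G = t + 1)
    (hint : crossInt t (covers n t F ∪ covers n t G) (covers n t F ∪ covers n t G))
    (htau : tau n t (covers n t F ∪ covers n t G) = t)
    (hcf : (covers n t F).card = k - t + 1)
    (hcg : (covers n t G).card = l - t + 1)
    (hM : t + 2 ≤ (((covers n t F).biUnion id) ∩ ((covers n t G).biUnion id)).card) :
    ∃ X Y : Finset ℕ, X ⊆ Iv (t+1) n ∧ X.card = k - t + 1 ∧
      Y ⊆ Iv (t+1) n ∧ Y.card = l - t + 1 ∧ 2 ≤ (X ∩ Y).card ∧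
      isoPair n F G (famH n k t X Y) (famH n l t Y X) := by
  classical
  obtain ⟨hF, hG, hcross, hmaxP⟩ := hmax
  have htn : t ≤ n := by
    have hb : 0 ≤ (t+1)^2 * (k+l)^2 * (k - t + 1) * (l - t + 1) := Nat.zero_le _
    set b := (t+1)^2 * (k+l)^2 * (k - t + 1) * (l - t + 1) with hbdef
    omega
  -- extract the t-cover T of the union of cover families
  have hUne : {c : ℕ | ∃ T : Finset ℕ, T ⊆ Finset.Icc 1 n ∧ T.card = c ∧
      ∀ A ∈ (covers n t F ∪ covers n t G), t ≤ (T ∩ A).card}.Nonempty := by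
    by_contra h
    rw [Set.not_nonempty_iff_eq_empty] at h
    rw [tau, h] at htau
    simp at htau
    omega
  have hmem := Nat.sInf_mem hUne
  rw [show sInf {c : ℕ | ∃ T : Finset ℕ, T ⊆ Finset.Icc 1 n ∧ T.card = c ∧
      ∀ A ∈ (covers n t F ∪ covers n t G), t ≤ (T ∩ A).card}
    = tau n t (covers n t F ∪ covers n t G) from rfl, htau] at hmem
  obtain ⟨T, hTsub, hTcard, hTcov⟩ := hmem
  have hTC : ∀ C ∈ covers n t F ∪ covers n t G, T ⊆ C := by
    intro C hC
    have h1 := hTcov C hC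
    have h2 : T ∩ C = T := eq_of_subset_of_card_le inter_subset_left (by omega)
    exact inter_eq_left.mp h2
  have hTCF : ∀ C ∈ covers n t F, T ⊆ C := fun C hC => hTC C (mem_union_left _ hC)
  have hTCG : ∀ C ∈ covers n t G, T ⊆ C := fun C hC => hTC C (mem_union_right _ hC)
  obtain ⟨hXcard, hXT, hXI, hstrF⟩ :=
    coverStructure n k t F T ht0 hk hTcard hTCF hcf hF
  obtain ⟨hYcard, hYT, hYI, hstrG⟩ :=
    coverStructure n l t G T ht0 hl hTcard hTCG hcg hG
  set X := (covers n t F).biUnion (fun C => C \ T) with hXdef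
  set Y := (covers n t G).biUnion (fun C => C \ T) with hYdef
  -- special members
  have hspec : ∀ (H : Finset (Finset ℕ)), tau n t H = t + 1 → ∃ A ∈ H, ¬ T ⊆ A := by
    intro H htH
    by_contra h
    push_neg at h
    have hmem : t ∈ {c : ℕ | ∃ T' : Finset ℕ, T' ⊆ Finset.Icc 1 n ∧ T'.card = c ∧
        ∀ A ∈ H, t ≤ (T' ∩ A).card} := by
      refine ⟨T, hTsub, hTcard, fun A hA => ?_⟩
      rw [inter_eq_left.mpr (h A hA), hTcard]
    have := Nat.sInf_le hmem
    rw [show sInf {c : ℕ | ∃ T' : Finset ℕ, T' ⊆ Finset.Icc 1 n ∧ T'.card = c ∧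
        ∀ A ∈ H, t ≤ (T' ∩ A).card} = tau n t H from rfl, htH] at this
    omega
  obtain ⟨A₀, hA₀F, hA₀T⟩ := hspec F htF
  obtain ⟨B₀, hB₀G, hB₀T⟩ := hspec G htG
  obtain ⟨i₀, hi₀T, hA₀eq⟩ := hstrF A₀ hA₀F hA₀T
  obtain ⟨j₀, hj₀T, hB₀eq⟩ := hstrG B₀ hB₀G hB₀T
  -- |X ∩ Y| ≥ 2
  have hbU : ∀ (H : Finset (Finset ℕ)) (c : ℕ), (covers n t H).card = c → 0 < c →
      (∀ C ∈ covers n t H, T ⊆ C) →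
      (covers n t H).biUnion id = T ∪ (covers n t H).biUnion (fun C => C \ T) := by
    intro H c hc hcpos hTH
    ext x
    simp only [mem_biUnion, id, mem_union]
    constructor
    · rintro ⟨C, hC, hxC⟩
      by_cases hxT : x ∈ T
      · exact Or.inl hxT
      · exact Or.inr ⟨C, hC, mem_sdiff.mpr ⟨hxC, hxT⟩⟩
    · rintro (hxT | ⟨C, hC, hxC⟩)
      · have : (covers n t H).Nonempty := card_pos.mp (by omega)
        obtain ⟨C, hC⟩ := this
        exact ⟨C, hC, hTH C hC hxT⟩
      · exact ⟨C, hC, (mem_sdiff.mp hxC).1⟩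
  have hXY2 : 2 ≤ (X ∩ Y).card := by
    rw [hbU F (k - t + 1) hcf (by omega) hTCF, hbU G (l - t + 1) hcg (by omega) hTCG] at hM
    have heq : (T ∪ X) ∩ (T ∪ Y) = T ∪ (X ∩ Y) := by
      ext x; simp only [mem_inter, mem_union]; tauto
    rw [heq, card_union_of_disjoint
      (disjoint_of_subset_right inter_subset_left hXT.symm), hTcard] at hM
    omega
  -- define the canonical families
  set F' := (ksubsets (Iv 1 n) k).filter (fun A => T ⊆ A ∧ 1 ≤ (A ∩ Y).card)
      ∪ T.image (fun i => (X ∪ T).erase i) with hF'def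
  set G' := (ksubsets (Iv 1 n) l).filter (fun B => T ⊆ B ∧ 1 ≤ (B ∩ X).card)
      ∪ T.image (fun j => (Y ∪ T).erase j) with hG'def
  have herase_mem : ∀ (Z : Finset ℕ) (m : ℕ), Disjoint Z T → Z ⊆ Icc 1 n →
      Z.card = m - t + 1 → t + 1 ≤ m → ∀ i ∈ T, (Z ∪ T).erase i ∈ ksubsets (Iv 1 n) m := by
    intro Z m hZT hZI hZc hm i hi
    rw [mem_ksubsets]
    constructor
    · intro x hx
      have := (erase_subset _ _) hx
      rcases mem_union.mp this with h | h
      · exact hZI h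
      · exact hTsub h
    · rw [card_erase_of_mem (mem_union_right _ hi), card_union_of_disjoint hZT, hZc, hTcard]
      omega
  have hF'k : F' ⊆ ksubsets (Iv 1 n) k := by
    rw [hF'def]
    apply union_subset (filter_subset _ _)
    intro A hA
    obtain ⟨i, hi, rfl⟩ := mem_image.mp hA
    exact herase_mem X k hXT hXI hXcard hk i hi
  have hG'l : G' ⊆ ksubsets (Iv 1 n) l := by
    rw [hG'def]
    apply union_subset (filter_subset _ _)
    intro B hB
    obtain ⟨j, hj, rfl⟩ := mem_image.mp hB
    exact herase_mem Y l hYT hYI hYcard hl j hj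
  -- cross-intersecting
  have hcross' : crossInt t F' G' := by
    intro A hA B hB
    rw [hF'def] at hA
    rw [hG'def] at hB
    rcases mem_union.mp hA with hA | hA <;> rcases mem_union.mp hB with hB | hB
    · obtain ⟨-, hTA, -⟩ := mem_filter.mp hA
      obtain ⟨-, hTB, -⟩ := mem_filter.mp hB
      calc t = T.card := hTcard.symm
        _ ≤ _ := card_le_card (subset_inter hTA hTB)
    · obtain ⟨-, hTA, hAY⟩ := mem_filter.mp hA
      obtain ⟨j, hj, rfl⟩ := mem_image.mp hB
      have hsub : (A ∩ Y) ∪ T.erase j ⊆ A ∩ ((Y ∪ T).erase j) := by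
        intro x hx
        rcases mem_union.mp hx with h | h
        · obtain ⟨hxA, hxY⟩ := mem_inter.mp h
          refine mem_inter.mpr ⟨hxA, mem_erase.mpr ⟨?_, mem_union_left _ hxY⟩⟩
          rintro rfl; exact disjoint_left.mp hYT hxY hj
        · obtain ⟨hxj, hxT⟩ := mem_erase.mp h
          exact mem_inter.mpr ⟨hTA hxT, mem_erase.mpr ⟨hxj, mem_union_right _ hxT⟩⟩
      have h1 := card_le_card hsub
      rw [card_union_of_disjoint (disjoint_of_subset_left inter_subset_right
        (disjoint_of_subset_right (erase_subset _ _) hYT))] at h1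
      rw [card_erase_of_mem hj, hTcard] at h1
      omega
    · obtain ⟨-, hTB, hBX⟩ := mem_filter.mp hB
      obtain ⟨i, hi, rfl⟩ := mem_image.mp hA
      have hsub : (B ∩ X) ∪ T.erase i ⊆ ((X ∪ T).erase i) ∩ B := by
        intro x hx
        rcases mem_union.mp hx with h | h
        · obtain ⟨hxB, hxX⟩ := mem_inter.mp h
          refine mem_inter.mpr ⟨mem_erase.mpr ⟨?_, mem_union_left _ hxX⟩, hxB⟩
          rintro rfl; exact disjoint_left.mp hXT hxX hi
        · obtain ⟨hxi, hxT⟩ := mem_erase.mp h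
          exact mem_inter.mpr ⟨mem_erase.mpr ⟨hxi, mem_union_right _ hxT⟩, hTB hxT⟩
      have h1 := card_le_card hsub
      rw [card_union_of_disjoint (disjoint_of_subset_left inter_subset_right
        (disjoint_of_subset_right (erase_subset _ _) hXT))] at h1
      rw [card_erase_of_mem hi, hTcard] at h1
      omega
    · obtain ⟨i, hi, rfl⟩ := mem_image.mp hA
      obtain ⟨j, hj, rfl⟩ := mem_image.mp hB
      have hsub : (X ∩ Y) ∪ ((T.erase i).erase j) ⊆
          ((X ∪ T).erase i) ∩ ((Y ∪ T).erase j) := by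
        intro x hx
        rcases mem_union.mp hx with h | h
        · obtain ⟨hxX, hxY⟩ := mem_inter.mp h
          refine mem_inter.mpr ⟨mem_erase.mpr ⟨?_, mem_union_left _ hxX⟩,
            mem_erase.mpr ⟨?_, mem_union_left _ hxY⟩⟩
          · rintro rfl; exact disjoint_left.mp hXT hxX hi
          · rintro rfl; exact disjoint_left.mp hYT hxY hj
        · have h1 := mem_erase.mp h
          have hxj := h1.1
          have hxi := (mem_erase.mp h1.2).1
          have hxT := (mem_erase.mp h1.2).2
          exact mem_inter.mpr ⟨mem_erase.mpr ⟨hxi, mem_union_right _ hxT⟩,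
            mem_erase.mpr ⟨hxj, mem_union_right _ hxT⟩⟩
      have h1 := card_le_card hsub
      have hd : Disjoint (X ∩ Y) ((T.erase i).erase j) :=
        disjoint_of_subset_left inter_subset_left
          (disjoint_of_subset_right ((erase_subset _ _).trans (erase_subset _ _)) hXT)
      rw [card_union_of_disjoint hd] at h1
      have h2 : t - 2 ≤ ((T.erase i).erase j).card := by
        have e1 : T.card - 1 ≤ (T.erase i).card := pred_card_le_card_erase
        have e2 : (T.erase i).card - 1 ≤ ((T.erase i).erase j).card := pred_card_le_card_erase
        omega
      omega
  -- F ⊆ F'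
  have hFF' : F ⊆ F' := by
    intro A hA
    by_cases hTA : T ⊆ A
    · rw [hF'def]
      apply mem_union_left
      rw [mem_filter]
      refine ⟨hF hA, hTA, ?_⟩
      have hAB := hcross A hA B₀ hB₀G
      rw [hB₀eq] at hAB
      have hsub : A ∩ ((Y ∪ T).erase j₀) ⊆ (A ∩ Y) ∪ T.erase j₀ := by
        intro x hx
        obtain ⟨hxA, hxB⟩ := mem_inter.mp hx
        obtain ⟨hxj, hxYT⟩ := mem_erase.mp hxB
        rcases mem_union.mp hxYT with h | h
        · exact mem_union_left _ (mem_inter.mpr ⟨hxA, h⟩)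
        · exact mem_union_right _ (mem_erase.mpr ⟨hxj, h⟩)
      have h1 := card_le_card hsub
      have h2 := card_union_le (A ∩ Y) (T.erase j₀)
      rw [card_erase_of_mem hj₀T, hTcard] at h2
      omega
    · obtain ⟨i, hi, rfl⟩ := hstrF A hA hTA
      rw [hF'def]
      exact mem_union_right _ (mem_image.mpr ⟨i, hi, rfl⟩)
  -- G ⊆ G'
  have hGG' : G ⊆ G' := by
    intro B hB
    by_cases hTB : T ⊆ B
    · rw [hG'def]
      apply mem_union_left
      rw [mem_filter]
      refine ⟨hG hB, hTB, ?_⟩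
      have hAB := hcross A₀ hA₀F B hB
      rw [hA₀eq] at hAB
      have hsub : ((X ∪ T).erase i₀) ∩ B ⊆ (B ∩ X) ∪ T.erase i₀ := by
        intro x hx
        obtain ⟨hxA, hxB⟩ := mem_inter.mp hx
        obtain ⟨hxi, hxXT⟩ := mem_erase.mp hxA
        rcases mem_union.mp hxXT with h | h
        · exact mem_union_left _ (mem_inter.mpr ⟨hxB, h⟩)
        · exact mem_union_right _ (mem_erase.mpr ⟨hxi, h⟩)
      have h1 := card_le_card hsub
      have h2 := card_union_le (B ∩ X) (T.erase i₀)
      rw [card_erase_of_mem hi₀T, hTcard] at h2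
      omega
    · obtain ⟨j, hj, rfl⟩ := hstrG B hB hTB
      rw [hG'def]
      exact mem_union_right _ (mem_image.mpr ⟨j, hj, rfl⟩)
  obtain ⟨hFeq, hGeq⟩ := hmaxP F' G' hF'k hG'l hcross' hFF' hGG'
  -- build the permutation
  obtain ⟨σ, hinv, hperm, hTimg⟩ := exists_perm_helper n t T hTsub hTcard htn
  have hinj : Function.Injective (σ : ℕ → ℕ) := σ.injective
  have hIccimg : (Icc 1 n).image σ = Icc 1 n := by
    apply eq_of_subset_of_card_le
    · intro y hy
      obtain ⟨x, hx, rfl⟩ := mem_image.mp hy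
      exact hperm x hx
    · rw [card_image_of_injective _ hinj]
  refine ⟨X.image σ, Y.image σ, ?_, ?_, ?_, ?_, ?_, σ, hperm, ?_, ?_⟩
  · intro y hy
    obtain ⟨x, hx, rfl⟩ := mem_image.mp hy
    have h1 : σ x ∈ Icc 1 n := hperm x (hXI hx)
    have h2 : σ x ∉ Icc 1 t := by
      rw [show (Icc 1 t : Finset ℕ) = T.image σ from by simpa [Iv] using hTimg.symm]
      rw [mem_image]
      rintro ⟨x', hx', hxx⟩
      have : x' = x := hinj hxx
      exact disjoint_left.mp hXT hx (this ▸ hx')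
    simp only [Iv, mem_Icc] at h1 h2 ⊢
    omega
  · rw [card_image_of_injective _ hinj]; exact hXcard
  · intro y hy
    obtain ⟨x, hx, rfl⟩ := mem_image.mp hy
    have h1 : σ x ∈ Icc 1 n := hperm x (hYI hx)
    have h2 : σ x ∉ Icc 1 t := by
      rw [show (Icc 1 t : Finset ℕ) = T.image σ from by simpa [Iv] using hTimg.symm]
      rw [mem_image]
      rintro ⟨x', hx', hxx⟩
      have : x' = x := hinj hxx
      exact disjoint_left.mp hYT hx (this ▸ hx')
    simp only [Iv, mem_Icc] at h1 h2 ⊢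
    omega
  · rw [card_image_of_injective _ hinj]; exact hYcard
  · rw [← image_inter _ _ hinj, card_image_of_injective _ hinj]; exact hXY2
  · rw [hFeq, hF'def]
    exact mapFam_famH n k t σ hinv hIccimg T X Y hTimg
  · rw [hGeq, hG'def]
    exact mapFam_famH n l t σ hinv hIccimg T Y X hTimg
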